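/- There exists a 4-separable quaternion matrix M ∈ ℍ_S^{3×5} with rank(mat(M)) = 3 and M = M(:,{1,2,3,4}) H for which the nonnegative factor H ∈ ℝ^{4×5}₊ is not unique up to permutation and scaling: both H₁ with last column (0.1, 0.4, 0.4, 0)ᵀ and H₂ with last column (0.3, 0.2, 0.2, 0.4)ᵀ (and identity on the first four columns) satisfy M = M(:,{1,2,3,4}) H_i. Equivalently: there exist four vectors y₁, y₂, y₃, y₄ ∈ ℝ^{12} spanning a 3-dimensional subspace, with first-block nonnegativity, such that some vector has two distinct nonnegative representations in terms of y₁,…,y₄. -/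

import Mathlib

open scoped BigOperators

/-- The `l`-th real component of a quaternion. -/
noncomputable def qcomp : Fin 4 → Quaternion ℝ → ℝ := fun l q => ![q.re, q.imI, q.imJ, q.imK] l

noncomputable def Amat : Matrix (Fin 3) (Fin 5) ℝ :=
  !![0,1,0,0.5,0.4; 0,0,1,0.5,0.4; 1,1,1,0.5,0.9]

noncomputable def Mq : Fin 3 → Fin 5 → Quaternion ℝ := fun i j => ⟨Amat i j, 0, 0, 0⟩

noncomputable def Hm1 : Matrix (Fin 4) (Fin 5) ℝ :=
  !![1,0,0,0,0.1; 0,1,0,0,0.4; 0,0,1,0,0.4; 0,0,0,1,0]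

noncomputable def Hm2 : Matrix (Fin 4) (Fin 5) ℝ :=
  !![1,0,0,0,0.3; 0,1,0,0,0.2; 0,0,1,0,0.2; 0,0,0,1,0.4]

lemma cs0 : Fin.castSucc (0 : Fin 4) = (0 : Fin 5) := rfl
lemma cs1 : Fin.castSucc (1 : Fin 4) = (1 : Fin 5) := rfl
lemma cs2 : Fin.castSucc (2 : Fin 4) = (2 : Fin 5) := rfl
lemma cs3 : Fin.castSucc (3 : Fin 4) = (3 : Fin 5) := rfl

lemma fact1 : ∀ (i : Fin 3) (j : Fin 5),
    Amat i j = ∑ s : Fin 4, Hm1 s j * Amat i (Fin.castSucc s) := by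
  intro i j
  fin_cases i <;> fin_cases j <;>
    simp [Amat, Hm1, Fin.sum_univ_four, cs0, cs1, cs2, cs3, Matrix.vecHead, Matrix.vecTail] <;>
    norm_num

lemma fact2 : ∀ (i : Fin 3) (j : Fin 5),
    Amat i j = ∑ s : Fin 4, Hm2 s j * Amat i (Fin.castSucc s) := by
  intro i j
  fin_cases i <;> fin_cases j <;>
    simp [Amat, Hm2, Fin.sum_univ_four, cs0, cs1, cs2, cs3, Matrix.vecHead, Matrix.vecTail] <;>
    norm_num

lemma qfact (H : Fin 4 → Fin 5 → ℝ)
    (h : ∀ i j, Amat i j = ∑ s : Fin 4, H s j * Amat i (Fin.castSucc s)) :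
    ∀ i j, Mq i j = ∑ s : Fin 4, H s j • Mq i (Fin.castSucc s) := by
  intro i j
  apply QuaternionAlgebra.ext
  · simp [Fin.sum_univ_four]; simpa [Mq, Fin.sum_univ_four] using h i j
  all_goals (simp [Fin.sum_univ_four]; simp [Mq])

lemma sep : ∀ t : Fin 4, ∃ w : Fin 3 → ℝ,
    (∑ i, w i * Amat i (Fin.castSucc t)) < 0 ∧
    ∀ j, j ≠ Fin.castSucc t → 0 ≤ ∑ i, w i * Amat i j := by
  intro t
  fin_cases t
  · refine ⟨![1,1,-0.5], ?_, ?_⟩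
    · norm_num [Fin.sum_univ_three, Amat, cs0, Matrix.cons_val_two, Matrix.vecHead, Matrix.vecTail]
    · intro j hj
      fin_cases j <;>
        first
          | exact absurd rfl hj
          | (simp_all [Fin.sum_univ_three, Amat, Fin.ext_iff, Matrix.vecHead, Matrix.vecTail] <;>
              norm_num)
  · refine ⟨![-1,1,0.9], ?_, ?_⟩
    · norm_num [Fin.sum_univ_three, Amat, cs1, Matrix.cons_val_two, Matrix.vecHead, Matrix.vecTail]
    · intro j hj
      fin_cases j <;>
        first
          | exact absurd rfl hj
          | (simp_all [Fin.sum_univ_three, Amat, Fin.ext_iff, Matrix.vecHead, Matrix.vecTail] <;>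
              norm_num)
  · refine ⟨![1,-1,0.9], ?_, ?_⟩
    · norm_num [Fin.sum_univ_three, Amat, cs2, Matrix.cons_val_two, Matrix.vecHead, Matrix.vecTail]
    · intro j hj
      fin_cases j <;>
        first
          | exact absurd rfl hj
          | (simp_all [Fin.sum_univ_three, Amat, Fin.ext_iff, Matrix.vecHead, Matrix.vecTail] <;>
              norm_num)
  · refine ⟨![-1,-1,1.5], ?_, ?_⟩
    · norm_num [Fin.sum_univ_three, Amat, cs3, Matrix.cons_val_two, Matrix.vecHead, Matrix.vecTail]
    · intro j hj
      fin_cases j <;>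
        first
          | exact absurd rfl hj
          | (simp_all [Fin.sum_univ_three, Amat, Fin.ext_iff, Matrix.vecHead, Matrix.vecTail] <;>
              norm_num)


noncomputable def Emat : Matrix (Fin 4 × Fin 3) (Fin 3) ℝ :=
  fun p i' => if p.1 = 0 ∧ p.2 = i' then 1 else 0

noncomputable def Fmat : Matrix (Fin 3) (Fin 4 × Fin 3) ℝ :=
  fun i p => if p.1 = 0 ∧ p.2 = i then 1 else 0

noncomputable def Gmat : Matrix (Fin 5) (Fin 3) ℝ :=
  !![1,0,0; 0,1,0; 0,0,1; 0,0,0; 0,0,0]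

noncomputable def Cmat : Matrix (Fin 3) (Fin 3) ℝ :=
  !![0,1,0; 0,0,1; 1,1,1]


/-- There exists a 4-separable quaternion matrix `M ∈ ℍ_S^{3×5}` with
`rank(mat M) = 3` and `M = M(:,{1,2,3,4}) H` for which the nonnegative factor `H`
is not unique up to permutation and scaling: both `H₁` with last column
`(0.1, 0.4, 0.4, 0)ᵀ` and `H₂` with last column `(0.3, 0.2, 0.2, 0.4)ᵀ` (and the
identity on the first four columns) satisfy `M = M(:,{1,2,3,4}) H_i`.  (4-separable
means that no factorization using only 3 columns of `M` exists.) -/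
theorem stmt18 :
    ∃ M : Fin 3 → Fin 5 → Quaternion ℝ,
      (∀ i j, 0 ≤ (M i j).re ∧
        (M i j).imI ^ 2 + (M i j).imJ ^ 2 + (M i j).imK ^ 2 ≤ (M i j).re ^ 2) ∧
      (∀ X : Matrix (Fin 4 × Fin 3) (Fin 5) ℝ,
        (∀ l i j, X (l, i) j = qcomp l (M i j)) → X.rank = 3) ∧
      -- minimality: no separable factorization with only 3 columns
      (¬ ∃ (K : Fin 3 → Fin 5) (H : Fin 3 → Fin 5 → ℝ),
        (∀ s j, 0 ≤ H s j) ∧ ∀ i j, M i j = ∑ s, H s j • M i (K s)) ∧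
      ∃ H₁ H₂ : Fin 4 → Fin 5 → ℝ,
        H₁ ≠ H₂ ∧
        (∀ s j, 0 ≤ H₁ s j) ∧ (∀ s j, 0 ≤ H₂ s j) ∧
        (∀ s s' : Fin 4, H₁ s (Fin.castSucc s') = if s = s' then 1 else 0) ∧
        (∀ s s' : Fin 4, H₂ s (Fin.castSucc s') = if s = s' then 1 else 0) ∧
        (H₁ 0 4 = 0.1 ∧ H₁ 1 4 = 0.4 ∧ H₁ 2 4 = 0.4 ∧ H₁ 3 4 = 0) ∧
        (H₂ 0 4 = 0.3 ∧ H₂ 1 4 = 0.2 ∧ H₂ 2 4 = 0.2 ∧ H₂ 3 4 = 0.4) ∧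
        (∀ i j, M i j = ∑ s, H₁ s j • M i (Fin.castSucc s)) ∧
        (∀ i j, M i j = ∑ s, H₂ s j • M i (Fin.castSucc s)) := by
  refine ⟨Mq, ?_, ?_, ?_, ?_⟩
  · intro i j
    constructor
    · show (0:ℝ) ≤ Amat i j
      fin_cases i <;> fin_cases j <;> norm_num [Amat, Matrix.vecHead, Matrix.vecTail]
    · show (0:ℝ)^2 + (0:ℝ)^2 + (0:ℝ)^2 ≤ (Amat i j)^2
      simpa using sq_nonneg (Amat i j)
  · intro X hX
    have hXE : X = Emat * Amat := by
      ext ⟨l, i⟩ j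
      rw [hX l i j, Matrix.mul_apply, Fin.sum_univ_three]
      fin_cases l <;> fin_cases i <;>
        simp [Emat, qcomp, Mq, Fin.ext_iff] <;>
        first | rfl | norm_num
    have hFX : Fmat * X = Amat := by
      ext i j
      rw [Matrix.mul_apply, Fintype.sum_prod_type]
      simp only [Fin.sum_univ_four, Fin.sum_univ_three, hX]
      fin_cases i <;>
        simp [Fmat, qcomp, Mq, Fin.ext_iff]
    have hAG : Amat * Gmat = Cmat := by
      ext i j
      rw [Matrix.mul_apply, Fin.sum_univ_five]
      fin_cases i <;> fin_cases j <;>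
        norm_num [Amat, Gmat, Cmat, Matrix.cons_val_two, Matrix.cons_val_three, Matrix.cons_val_four, Matrix.vecHead, Matrix.vecTail]
    have hCdet : Cmat.det = 1 := by
      rw [Matrix.det_fin_three]
      norm_num [Cmat, Matrix.cons_val_two, Matrix.vecHead, Matrix.vecTail]
    have hC : Cmat.rank = 3 := by
      have hu : IsUnit Cmat := (Matrix.isUnit_iff_isUnit_det _).mpr (by rw [hCdet]; exact isUnit_one)
      rw [Matrix.rank_of_isUnit _ hu]
      simp
    have hub : X.rank ≤ 3 := by
      rw [hXE]
      exact (Matrix.rank_mul_le_right _ _).trans Amat.rank_le_height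
    have hlb : 3 ≤ X.rank := by
      have h1 : (Fmat * X * Gmat).rank ≤ X.rank :=
        (Matrix.rank_mul_le_left _ _).trans (Matrix.rank_mul_le_right _ _)
      rwa [hFX, hAG, hC] at h1
    exact le_antisymm hub hlb
  · rintro ⟨K, H, hH, hfq⟩
    have hfac : ∀ i j, Amat i j = ∑ s : Fin 3, H s j * Amat i (K s) := by
      intro i j
      have h := congrArg QuaternionAlgebra.re (hfq i j)
      simp [Fin.sum_univ_three] at h; simpa [Mq, Fin.sum_univ_three] using h
    have hKt : ∀ t : Fin 4, ∃ s : Fin 3, K s = Fin.castSucc t := by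
      intro t
      by_contra hcon
      push_neg at hcon
      obtain ⟨w, hneg, hpos⟩ := sep t
      have key : ∑ i, w i * Amat i (Fin.castSucc t)
          = ∑ s : Fin 3, H s (Fin.castSucc t) * ∑ i, w i * Amat i (K s) := by
        calc ∑ i, w i * Amat i (Fin.castSucc t)
            = ∑ i, ∑ s : Fin 3, H s (Fin.castSucc t) * (w i * Amat i (K s)) := by
              refine Finset.sum_congr rfl fun i _ => ?_
              rw [hfac i (Fin.castSucc t), Finset.mul_sum]
              exact Finset.sum_congr rfl fun s _ => by ring
          _ = ∑ s : Fin 3, ∑ i, H s (Fin.castSucc t) * (w i * Amat i (K s)) :=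
              Finset.sum_comm
          _ = ∑ s : Fin 3, H s (Fin.castSucc t) * ∑ i, w i * Amat i (K s) := by
              refine Finset.sum_congr rfl fun s _ => ?_
              rw [Finset.mul_sum]
      have h0 : 0 ≤ ∑ s : Fin 3, H s (Fin.castSucc t) * ∑ i, w i * Amat i (K s) :=
        Finset.sum_nonneg fun s _ => mul_nonneg (hH s _) (hpos (K s) (hcon s))
      rw [key] at hneg
      linarith
    have hinj : Function.Injective (fun t : Fin 4 => (hKt t).choose) := by
      intro a b hab
      have hab' : (hKt a).choose = (hKt b).choose := hab
      have ha := (hKt a).choose_spec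
      have hb := (hKt b).choose_spec
      have hcc : Fin.castSucc a = Fin.castSucc b := by rw [← ha, ← hb, hab']
      exact Fin.castSucc_injective _ hcc
    have hcard := Fintype.card_le_of_injective _ hinj
    norm_num at hcard
  · refine ⟨fun s j => Hm1 s j, fun s j => Hm2 s j, ?_, ?_, ?_, ?_, ?_, ?_, ?_,
      qfact _ fact1, qfact _ fact2⟩
    · intro h
      have h34 := congrFun (congrFun h 3) 4
      norm_num [Hm1, Hm2, Matrix.cons_val_two, Matrix.cons_val_three, Matrix.cons_val_four, Matrix.vecHead, Matrix.vecTail] at h34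
    · intro s j
      fin_cases s <;> fin_cases j <;> norm_num [Hm1, Matrix.vecHead, Matrix.vecTail]
    · intro s j
      fin_cases s <;> fin_cases j <;> norm_num [Hm2, Matrix.vecHead, Matrix.vecTail]
    · intro s s'
      fin_cases s <;> fin_cases s' <;>
        norm_num [Hm1, cs0, cs1, cs2, cs3, Fin.ext_iff, Matrix.vecHead, Matrix.vecTail]
    · intro s s'
      fin_cases s <;> fin_cases s' <;>
        norm_num [Hm2, cs0, cs1, cs2, cs3, Fin.ext_iff, Matrix.vecHead, Matrix.vecTail]
    · exact ⟨rfl, rfl, rfl, rfl⟩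
    · exact ⟨rfl, rfl, rfl, rfl⟩
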